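/- The odd-indexed denominators satisfy the three-term recursion S_{n+3}(x) = (1 − 2x²/((2n+5)(2n+9))) S_{n+1}(x) − (x⁴/((2n+3)(2n+5)²(2n+7))) S_{n−1}(x) for all n ≥ 0. -/
import Mathlib


open Real

/-- The odd-indexed denominators satisfy the three-term recursion
`S_{n+3}(x) = (1 − 2x²/((2n+5)(2n+9))) S_{n+1}(x) − (x⁴/((2n+3)(2n+5)²(2n+7))) S_{n−1}(x)`
for all `n ≥ 0` (encoded as `T (n+1) x = S_n(x)`). -/
theorem S_odd_recursion (T : ℕ → ℝ → ℝ)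
    (hT0 : ∀ x, T 0 x = 1) (hT1 : ∀ x, T 1 x = 1)
    (hTrec : ∀ (n : ℕ) (x : ℝ),
      T (n + 2) x = T (n + 1) x - x ^ 2 / ((2 * (n : ℝ) + 3) * (2 * (n : ℝ) + 5)) * T n x) :
    ∀ (n : ℕ) (x : ℝ),
      T (n + 4) x =
        (1 - 2 * x ^ 2 / ((2 * (n : ℝ) + 5) * (2 * (n : ℝ) + 9))) * T (n + 2) x -
          x ^ 4 / ((2 * (n : ℝ) + 3) * (2 * (n : ℝ) + 5) ^ 2 * (2 * (n : ℝ) + 7)) * T n x := by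
  intro n x
  have h2 := hTrec (n + 2) x
  have h1 := hTrec (n + 1) x
  have h0 := hTrec n x
  push_cast at h2 h1
  rw [show n + 2 + 2 = n + 4 by ring, show n + 2 + 1 = n + 3 by ring] at h2
  rw [show n + 1 + 2 = n + 3 by ring] at h1
  have hn : (0:ℝ) ≤ (n:ℝ) := Nat.cast_nonneg n
  rw [h2, h1, h0]
  have h3 : (2 * (n:ℝ) + 3) ≠ 0 := by nlinarith
  have h5 : (2 * (n:ℝ) + 5) ≠ 0 := by nlinarith
  have h7 : (2 * (n:ℝ) + 7) ≠ 0 := by nlinarith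
  have h9 : (2 * (n:ℝ) + 9) ≠ 0 := by nlinarith
  field_simp
  ring
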